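/- Let (E, F) be a dual pair of real vector spaces. The Mackey topology τ(E, F) is the finest locally convex topology on E whose continuous dual is exactly F (Mackey–Arens): if μ is a locally convex topology on E with (E, μ)' = F, then μ is coarser than τ(E, F). -/

import Mathlib

open Topology Filter Set UniformConvergence Pointwise

/-- The weak topology `σ(F, E)` on `F` induced by a bilinear pairing `B : E × F → ℝ`. -/
def sigmaTopology {E F : Type*} [AddCommGroup E] [Module ℝ E] [AddCommGroup F] [Module ℝ F]
    (B : E →ₗ[ℝ] F →ₗ[ℝ] ℝ) : TopologicalSpace F :=
  TopologicalSpace.induced (fun f (x : E) => B x f) inferInstance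

/-- The Mackey topology `τ(E, F)` of a dual pair: the topology on `E` of uniform convergence
on absolutely convex `σ(F, E)`-compact subsets of `F`. -/
noncomputable def mackeyTopologyOfPairing {E F : Type*} [AddCommGroup E] [Module ℝ E]
    [AddCommGroup F] [Module ℝ F] (B : E →ₗ[ℝ] F →ₗ[ℝ] ℝ) : TopologicalSpace E :=
  TopologicalSpace.induced
    (fun x => UniformOnFun.ofFun
      {S : Set F | Balanced ℝ S ∧ Convex ℝ S ∧ @IsCompact F (sigmaTopology B) S}
      (fun f : F => B x f))
    inferInstance

/-- Mackey–Arens: for a dual pair `(E, F)`, any locally convex topology `μ` on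
`E` whose continuous dual is exactly `F` is coarser than the Mackey topology `τ(E, F)`. -/
theorem mackey_arens
    {E F : Type*} [AddCommGroup E] [Module ℝ E] [AddCommGroup F] [Module ℝ F]
    (B : E →ₗ[ℝ] F →ₗ[ℝ] ℝ)
    (hsepE : ∀ x : E, x ≠ 0 → ∃ f : F, B x f ≠ 0)
    (hsepF : ∀ f : F, f ≠ 0 → ∃ x : E, B x f ≠ 0)
    (μ : TopologicalSpace E)
    (hgrp : @IsTopologicalAddGroup E μ _)
    (hsmul : @ContinuousSMul ℝ E _ _ μ)
    (hlc : @LocallyConvexSpace ℝ E _ _ _ _ μ)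
    (hdual : ∀ φ : E →ₗ[ℝ] ℝ, @Continuous E ℝ μ _ φ ↔ ∃ f : F, ∀ x, φ x = B x f) :
    mackeyTopologyOfPairing B ≤ μ := by
  classical
  letI := μ
  haveI := hgrp; haveI := hsmul; haveI := hlc
  -- the bookkeeping family of sets
  set 𝔖 : Set (Set F) :=
    {S : Set F | Balanced ℝ S ∧ Convex ℝ S ∧ @IsCompact F (sigmaTopology B) S} with h𝔖
  -- Key step: every neighborhood of 0 for μ contains the open polar of an absolutely convex,
  -- σ(F,E)-compact set.
  have key : ∀ U' ∈ 𝓝 (0 : E), ∃ K ∈ 𝔖, {y : E | ∀ f ∈ K, |B y f| < 1} ⊆ U' := by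
    intro U' hU'
    -- a closed, absolutely convex neighborhood V of 0 inside U'
    obtain ⟨Cs, hCs, hCscl, hCsU⟩ := exists_mem_nhds_isClosed_subset hU'
    obtain ⟨W, ⟨hW0, hWbal, hWconv⟩, hWC⟩ := (nhds_hasBasis_absConvex ℝ E).mem_iff.mp hCs
    set V : Set E := closure W with hVdef
    have hV0 : V ∈ 𝓝 (0 : E) := Filter.mem_of_superset hW0 subset_closure
    have hVcl : IsClosed V := isClosed_closure
    have hVconv : Convex ℝ V := hWconv.closure
    have hVbal : Balanced ℝ V := hWbal.closure
    have hVU : V ⊆ U' := (closure_minimal hWC hCscl).trans hCsU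
    -- the polar of V
    set K : Set F := {f : F | ∀ x ∈ V, |B x f| ≤ 1} with hKdef
    have hKbal : Balanced ℝ K := by
      intro a ha
      rintro _ ⟨f, hf, rfl⟩ x hx
      have : B x (a • f) = a * B x f := by simp
      rw [this, abs_mul]
      calc |a| * |B x f| ≤ 1 * 1 := by
            apply mul_le_mul ha (hf x hx) (abs_nonneg _) zero_le_one
        _ = 1 := one_mul 1
    have hKconv : Convex ℝ K := by
      intro f hf g hg a b ha hb hab x hx
      have : B x (a • f + b • g) = a * B x f + b * B x g := by simp
      rw [this]
      calc |a * B x f + b * B x g| ≤ |a * B x f| + |b * B x g| := abs_add_le _ _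
        _ = a * |B x f| + b * |B x g| := by
            rw [abs_mul, abs_mul, abs_of_nonneg ha, abs_of_nonneg hb]
        _ ≤ a * 1 + b * 1 := by
            gcongr
            · exact hf x hx
            · exact hg x hx
        _ = 1 := by rw [mul_one, mul_one, hab]
    -- compactness of K for σ(F,E)
    have hKcomp : @IsCompact F (sigmaTopology B) K := by
      letI tF : TopologicalSpace F := sigmaTopology B
      have hind : Topology.IsInducing (fun f (x : E) => (B x f : ℝ)) := ⟨rfl⟩
      -- the image of K in the product space
      set C : Set (E → ℝ) :=
        (⋂ (x) (y), {g : E → ℝ | g (x + y) = g x + g y}) ∩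
        ((⋂ (c : ℝ) (x), {g : E → ℝ | g (c • x) = c * g x}) ∩
         (⋂ x ∈ V, {g : E → ℝ | |g x| ≤ 1})) with hCdef
      have hmemC : ∀ g : E → ℝ, g ∈ C ↔
          (∀ x y, g (x + y) = g x + g y) ∧ (∀ (c : ℝ) (x), g (c • x) = c * g x) ∧
          (∀ x ∈ V, |g x| ≤ 1) := by
        intro g
        simp only [hCdef, Set.mem_inter_iff, Set.mem_iInter, Set.mem_setOf_eq]
      have himage : (fun f (x : E) => (B x f : ℝ)) '' K = C := by
        apply Set.Subset.antisymm
        · rintro _ ⟨f, hf, rfl⟩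
          rw [hmemC]
          refine ⟨fun x y => ?_, fun c x => ?_, fun x hx => hf x hx⟩
          · simp
          · simp
        · intro g hg
          rw [hmemC] at hg
          obtain ⟨hadd, hsmul', hbd⟩ := hg
          set φ : E →ₗ[ℝ] ℝ :=
            { toFun := g
              map_add' := hadd
              map_smul' := fun c x => by simpa using hsmul' c x } with hφdef
          have hφc : @Continuous E ℝ μ _ φ := by
            refine continuous_of_continuousAt_zero φ.toAddMonoidHom ?_
            rw [ContinuousAt]
            have hφ0 : φ.toAddMonoidHom (0 : E) = 0 := map_zero _
            rw [hφ0, Metric.tendsto_nhds]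
            intro ε hε
            have hV2 : (ε / 2) • V ∈ 𝓝 (0 : E) := by
              rw [set_smul_mem_nhds_zero_iff (by positivity : ε / 2 ≠ 0)]
              exact hV0
            filter_upwards [hV2]
            rintro _ ⟨v, hv, rfl⟩
            have : g ((ε / 2) • v) = (ε / 2) * g v := hsmul' _ _
            simp only [AddMonoidHom.coe_coe]
            show dist (φ ((ε / 2) • v)) 0 < ε
            rw [Real.dist_eq, sub_zero]
            show |g ((ε / 2) • v)| < ε
            rw [this, abs_mul, abs_of_pos (by positivity : (0:ℝ) < ε / 2)]
            calc ε / 2 * |g v| ≤ ε / 2 * 1 :=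
                mul_le_mul_of_nonneg_left (hbd v hv) (by positivity)
              _ < ε := by linarith
          obtain ⟨f, hfφ⟩ := (hdual φ).1 hφc
          refine ⟨f, fun x hx => ?_, ?_⟩
          · rw [← hfφ x]; exact hbd x hx
          · funext x; exact (hfφ x).symm
      -- C is closed
      have hCcl : IsClosed C := by
        refine IsClosed.inter ?_ (IsClosed.inter ?_ ?_)
        · exact isClosed_iInter fun x => isClosed_iInter fun y =>
            isClosed_eq (continuous_apply _) ((continuous_apply x).add (continuous_apply y))
        · exact isClosed_iInter fun c => isClosed_iInter fun x =>
            isClosed_eq (continuous_apply _) ((continuous_apply x).const_smul c)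
        · exact isClosed_iInter fun x => isClosed_iInter fun _ =>
            isClosed_le (continuous_apply x).abs continuous_const
      -- C is pointwise bounded
      have hb : ∀ x : E, ∃ r : ℝ, ∀ g ∈ C, |g x| ≤ r := by
        intro x
        have hT : Filter.Tendsto (fun t : ℝ => t • x) (𝓝 0) (𝓝 (0 : E)) := by
          have hc : Continuous fun t : ℝ => t • x := continuous_id.smul continuous_const
          have := hc.tendsto 0
          simpa using this
        obtain ⟨ε, hε, hball⟩ := Metric.mem_nhds_iff.mp (hT hV0)
        have htV : (ε / 2) • x ∈ V := by
          apply hball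
          simp only [Metric.mem_ball, Real.dist_eq, sub_zero]
          rw [abs_of_pos (by positivity : (0:ℝ) < ε / 2)]
          linarith
        refine ⟨|(ε / 2)⁻¹|, fun g hg => ?_⟩
        rw [hmemC] at hg
        obtain ⟨_, hsmul', hbd⟩ := hg
        have hx : x = (ε / 2)⁻¹ • ((ε / 2) • x) := by
          rw [smul_smul, inv_mul_cancel₀ (by positivity : (ε / 2 : ℝ) ≠ 0), one_smul]
        calc |g x| = |(ε / 2)⁻¹ * g ((ε / 2) • x)| := by rw [hx, hsmul']; rw [← hx]
          _ = |(ε / 2)⁻¹| * |g ((ε / 2) • x)| := abs_mul _ _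
          _ ≤ |(ε / 2)⁻¹| * 1 :=
              mul_le_mul_of_nonneg_left (hbd _ htV) (abs_nonneg _)
          _ = |(ε / 2)⁻¹| := mul_one _
      choose r hr using hb
      have hsub : C ⊆ Set.univ.pi fun x => Set.Icc (-(r x)) (r x) := by
        intro g hg
        rw [Set.mem_univ_pi]
        intro x
        exact abs_le.mp (hr x g hg)
      have hCcomp : IsCompact C :=
        IsCompact.of_isClosed_subset (isCompact_univ_pi fun x => isCompact_Icc) hCcl hsub
      rw [hind.isCompact_iff, himage]
      exact hCcomp
    refine ⟨K, ⟨hKbal, hKconv, hKcomp⟩, ?_⟩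
    -- the open polar of K is contained in V (bipolar, via Hahn-Banach)
    intro y hy
    by_contra hyV'
    have hyV : y ∉ V := fun h => hyV' (hVU h)
    · exact hyV' (hVU (by
        by_contra hyVmem
        obtain ⟨φ, u, hφa, hφy⟩ := geometric_hahn_banach_closed_point hVconv hVcl hyVmem
        have hu0 : 0 < u := by
          have := hφa 0 (mem_of_mem_nhds hV0)
          simpa using this
        -- |φ| ≤ u on V
        have hφbd : ∀ a ∈ V, |φ a| ≤ u := by
          intro a ha
          rw [abs_le]
          constructor
          · have hna : -a ∈ V := by
              have := hVbal (-1) (by norm_num)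
              have : -a ∈ (-1 : ℝ) • V := ⟨a, ha, by simp⟩
              exact hVbal (-1) (by norm_num) this
            have := hφa (-a) hna
            simp only [map_neg] at this
            linarith
          · exact le_of_lt (hφa a ha)
        set ψ : E →ₗ[ℝ] ℝ := u⁻¹ • (φ : E →ₗ[ℝ] ℝ) with hψdef
        have hψc : @Continuous E ℝ μ _ ψ := by
          have : @Continuous E ℝ μ _ φ := φ.continuous
          exact (continuous_const.mul this : Continuous fun x => u⁻¹ * φ x)
        obtain ⟨f, hfψ⟩ := (hdual ψ).1 hψc
        have hfK : f ∈ K := by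
          intro a ha
          rw [← hfψ a]
          show |u⁻¹ * φ a| ≤ 1
          rw [abs_mul, abs_of_pos (inv_pos.mpr hu0)]
          have h4 : u⁻¹ * |φ a| ≤ u⁻¹ * u :=
            mul_le_mul_of_nonneg_left (hφbd a ha) (le_of_lt (inv_pos.mpr hu0))
          rwa [inv_mul_cancel₀ (ne_of_gt hu0)] at h4
        have h1 : |B y f| < 1 := hy f hfK
        have h2 : (1 : ℝ) < B y f := by
          rw [← hfψ y]
          show (1:ℝ) < u⁻¹ * φ y
          have h3 : u⁻¹ * u < u⁻¹ * φ y :=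
            mul_lt_mul_of_pos_left hφy (inv_pos.mpr hu0)
          rwa [inv_mul_cancel₀ (ne_of_gt hu0)] at h3
        have := lt_of_lt_of_le h2 (le_abs_self _)
        linarith))
  -- conclude by comparing neighborhoods
  rw [le_iff_nhds]
  intro x
  intro U hU
  -- translate U to a neighborhood of 0
  have hU' : (fun y : E => x + y) ⁻¹' U ∈ 𝓝 (0 : E) := by
    have hcont : Continuous fun y : E => x + y := continuous_const.add continuous_id
    have : Filter.Tendsto (fun y : E => x + y) (𝓝 0) (𝓝 x) := by
      have := hcont.tendsto 0
      simpa using this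
    exact this hU
  obtain ⟨K, hK𝔖, hKU⟩ := key _ hU'
  -- now show U is a Mackey neighborhood of x
  show U ∈ @nhds E (mackeyTopologyOfPairing B) x
  rw [mackeyTopologyOfPairing, nhds_induced]
  rw [Filter.mem_comap]
  refine ⟨{g : F →ᵤ[𝔖] ℝ | ∀ f ∈ K,
      (UniformOnFun.toFun 𝔖 (UniformOnFun.ofFun 𝔖 (fun f : F => B x f)) f,
       UniformOnFun.toFun 𝔖 g f) ∈ {p : ℝ × ℝ | dist p.1 p.2 < 1}}, ?_, ?_⟩
  · exact UniformOnFun.gen_mem_nhds ℝ 𝔖 _ hK𝔖 (Metric.dist_mem_uniformity one_pos)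
  · intro y hy
    simp only [Set.mem_preimage, Set.mem_setOf_eq] at hy
    have hyx : y - x ∈ {z : E | ∀ f ∈ K, |B z f| < 1} := by
      intro f hf
      have := hy f hf
      simp only [UniformOnFun.toFun_ofFun, Set.mem_setOf_eq, Real.dist_eq] at this
      have heq : B (y - x) f = B y f - B x f := by simp
      rw [heq]
      rw [abs_sub_comm]
      exact this
    have := hKU hyx
    simpa using this
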